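/- Let φ : ℤ_p → ℂ_p be continuous. For each n ≥ 0 define T_n(φ)(x,y) = ∑_{k=0}^n (-1)^k k! · (y choose k) · (x choose k) · φ(x - k). Then for all m ≥ n and all x, y ∈ ℤ_p, |T_m(φ)(x,y) − T_n(φ)(x,y)| ≤ |(n+1)!|_p · ‖φ‖, and consequently the T_n converge uniformly to a continuous function T(φ) : ℤ_p × ℤ_p → ℂ_p given by T(φ)(x,y) = ∑_{k=0}^∞ (-1)^k k! (y choose k)(x choose k) φ(x-k). -/

import Mathlib

open Finset Filter
open Topology

/-- `(x choose k)` on `ℤ_p`, valued in a normed `ℚ_p`-algebra `K` (modelling `ℂ_p`). -/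
noncomputable def padicBinom (p : ℕ) [Fact p.Prime] (K : Type*) [NormedField K]
    [NormedAlgebra ℚ_[p] K] (x : ℤ_[p]) (k : ℕ) : K :=
  algebraMap ℚ_[p] K ((∏ i ∈ Finset.range k, ((x : ℚ_[p]) - (i : ℚ_[p]))) / (k.factorial : ℚ_[p]))

/-- Partial sums `T_n(φ)(x,y) = ∑_{k=0}^n (-1)^k k! (y choose k)(x choose k) φ(x-k)`. -/
noncomputable def twoVarPartial (p : ℕ) [Fact p.Prime] {K : Type*} [NormedField K]
    [NormedAlgebra ℚ_[p] K] (φ : ℤ_[p] → K) (n : ℕ) (x y : ℤ_[p]) : K :=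
  ∑ k ∈ Finset.range (n + 1),
    (-1 : K) ^ k * (k.factorial : K) * padicBinom p K y k * padicBinom p K x k * φ (x - (k : ℤ_[p]))

variable {p : ℕ} [Fact p.Prime]

lemma prodSub_eq (x : ℤ_[p]) (k : ℕ) :
    ∏ i ∈ Finset.range k, (x - (i : ℤ_[p])) = (-1) ^ k * (ascPochhammer ℤ_[p] k).eval (-x) := by
  induction k with
  | zero => simp
  | succ n ih => rw [Finset.prod_range_succ, ih, ascPochhammer_succ_eval]; ring

lemma norm_prodSub_le (x : ℤ_[p]) (k : ℕ) :
    ‖∏ i ∈ Finset.range k, (x - (i : ℤ_[p]))‖ ≤ ‖(k.factorial : ℤ_[p])‖ := by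
  rw [prodSub_eq, norm_mul]
  have h1 : ‖((-1 : ℤ_[p])) ^ k‖ = 1 := by
    rw [norm_pow, norm_neg, norm_one, one_pow]
  rw [h1, one_mul]
  exact PadicInt.norm_ascPochhammer_le k (-x)

lemma norm_padicBinom_le (K : Type*) [NormedField K] [NormedAlgebra ℚ_[p] K]
    (x : ℤ_[p]) (k : ℕ) : ‖padicBinom p K x k‖ ≤ 1 := by
  rw [padicBinom, norm_algebraMap', norm_div]
  rw [div_le_one (by simpa using k.factorial_ne_zero)]
  have : (∏ i ∈ Finset.range k, ((x : ℚ_[p]) - (i : ℚ_[p])))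
      = ((∏ i ∈ Finset.range k, (x - (i : ℤ_[p])) : ℤ_[p]) : ℚ_[p]) := by
    rw [show ((∏ i ∈ Finset.range k, (x - (i : ℤ_[p])) : ℤ_[p]) : ℚ_[p])
        = PadicInt.Coe.ringHom (∏ i ∈ Finset.range k, (x - (i : ℤ_[p]))) from rfl, map_prod]
    exact Finset.prod_congr rfl fun i _ => by rw [show PadicInt.Coe.ringHom (x - (i:ℤ_[p])) = ((x - (i:ℤ_[p]) : ℤ_[p]) : ℚ_[p]) from rfl]; push_cast; rfl
  rw [this]
  have := norm_prodSub_le x k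
  rwa [PadicInt.norm_def, PadicInt.norm_def, PadicInt.coe_natCast] at this

lemma norm_natCast_le_of_dvd' {a b : ℕ} (h : a ∣ b) :
    ‖((b : ℕ) : ℚ_[p])‖ ≤ ‖((a : ℕ) : ℚ_[p])‖ := by
  obtain ⟨c, rfl⟩ := h
  push_cast
  rw [norm_mul]
  exact mul_le_of_le_one_right (norm_nonneg _) (by exact_mod_cast Padic.norm_int_le_one (c : ℤ))

lemma norm_factK_le {K : Type*} [NormedField K] [NormedAlgebra ℚ_[p] K] {a b : ℕ} (h : a ≤ b) :
    ‖((b.factorial : ℕ) : K)‖ ≤ ‖((a.factorial : ℕ) : K)‖ := by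
  rw [show ((b.factorial : ℕ) : K) = algebraMap ℚ_[p] K ((b.factorial : ℕ) : ℚ_[p]) from
      (map_natCast _ _).symm,
    show ((a.factorial : ℕ) : K) = algebraMap ℚ_[p] K ((a.factorial : ℕ) : ℚ_[p]) from
      (map_natCast _ _).symm, norm_algebraMap', norm_algebraMap']
  exact norm_natCast_le_of_dvd' (Nat.factorial_dvd_factorial h)

lemma tendsto_norm_factorial_padic :
    Tendsto (fun n : ℕ => ‖((n.factorial : ℕ) : ℚ_[p])‖) atTop (𝓝 0) := by
  have hp : Fact p.Prime := inferInstance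
  rw [Metric.tendsto_atTop]
  intro ε hε
  have h1 : (1 : ℝ) < (p : ℝ) := by exact_mod_cast hp.out.one_lt
  obtain ⟨m, hm⟩ : ∃ m : ℕ, ((p : ℝ)⁻¹) ^ m < ε :=
    exists_pow_lt_of_lt_one hε (by rw [inv_lt_one_iff₀]; right; exact h1)
  refine ⟨p ^ m, fun n hn => ?_⟩
  rw [dist_zero_right, Real.norm_eq_abs, abs_of_nonneg (norm_nonneg _)]
  calc ‖((n.factorial : ℕ) : ℚ_[p])‖ ≤ ‖((p ^ m : ℕ) : ℚ_[p])‖ :=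
        norm_natCast_le_of_dvd' (Nat.dvd_factorial (pow_pos hp.out.pos m) hn)
    _ = ((p : ℝ)⁻¹) ^ m := by
        push_cast
        rw [norm_pow, Padic.norm_p]
    _ < ε := hm

lemma term_norm_le {K : Type*} [NormedField K] [NormedAlgebra ℚ_[p] K] (φ : C(ℤ_[p], K))
    (k : ℕ) (x y : ℤ_[p]) :
    ‖(-1 : K) ^ k * (k.factorial : K) * padicBinom p K y k * padicBinom p K x k *
      φ (x - (k : ℤ_[p]))‖ ≤ ‖((k.factorial : ℕ) : K)‖ * ‖φ‖ := by
  rw [norm_mul, norm_mul, norm_mul, norm_mul, norm_pow, norm_neg, norm_one, one_pow, one_mul]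
  calc ‖(k.factorial : K)‖ * ‖padicBinom p K y k‖ * ‖padicBinom p K x k‖ * ‖φ (x - (k : ℤ_[p]))‖
      ≤ ‖(k.factorial : K)‖ * 1 * 1 * ‖φ‖ := by
        gcongr
        · exact norm_padicBinom_le K y k
        · exact norm_padicBinom_le K x k
        · exact φ.norm_coe_le_norm _
    _ = ‖((k.factorial : ℕ) : K)‖ * ‖φ‖ := by rw [mul_one, mul_one]

lemma partial_bound {K : Type*} [NormedField K] [NormedAlgebra ℚ_[p] K] [IsUltrametricDist K]
    (φ : C(ℤ_[p], K)) (m n : ℕ) (h : n ≤ m) (x y : ℤ_[p]) :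
    ‖twoVarPartial p (⇑φ) m x y - twoVarPartial p (⇑φ) n x y‖ ≤
      ‖(((n + 1).factorial : ℕ) : K)‖ * ‖φ‖ := by
  unfold twoVarPartial
  rw [← Finset.sum_Ico_eq_sub (fun k => (-1 : K) ^ k * (k.factorial : K) * padicBinom p K y k * padicBinom p K x k * φ (x - (k : ℤ_[p]))) (Nat.succ_le_succ h)]
  refine IsUltrametricDist.norm_sum_le_of_forall_le_of_nonneg
    (mul_nonneg (norm_nonneg _) (norm_nonneg _)) ?_
  intro k hk
  exact (term_norm_le φ k x y).trans
    (mul_le_mul_of_nonneg_right (norm_factK_le (p := p) (Finset.mem_Ico.1 hk).1) (norm_nonneg _))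

lemma continuous_padicBinom (K : Type*) [NormedField K] [NormedAlgebra ℚ_[p] K] (k : ℕ) :
    Continuous fun x : ℤ_[p] => padicBinom p K x k := by
  unfold padicBinom
  apply (continuous_algebraMap ℚ_[p] K).comp
  apply Continuous.div_const
  exact continuous_finset_prod _ fun i _ =>
    (continuous_subtype_val.sub continuous_const)

lemma continuous_twoVarPartial {K : Type*} [NormedField K] [NormedAlgebra ℚ_[p] K]
    (φ : C(ℤ_[p], K)) (n : ℕ) :
    Continuous fun q : ℤ_[p] × ℤ_[p] => twoVarPartial p (⇑φ) n q.1 q.2 := by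
  unfold twoVarPartial
  refine continuous_finset_sum _ fun k _ => ?_
  exact ((((continuous_const.mul continuous_const).mul
      ((continuous_padicBinom K k).comp continuous_snd)).mul
      ((continuous_padicBinom K k).comp continuous_fst)).mul
      (φ.continuous.comp ((continuous_fst.sub continuous_const))))

lemma tendsto_norm_factorial_K {K : Type*} [NormedField K] [NormedAlgebra ℚ_[p] K] :
    Tendsto (fun n : ℕ => ‖((n.factorial : ℕ) : K)‖) atTop (𝓝 0) := by
  have heq : ∀ n : ℕ, ‖((n.factorial : ℕ) : K)‖ = ‖((n.factorial : ℕ) : ℚ_[p])‖ := fun n => by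
    rw [show ((n.factorial : ℕ) : K) = algebraMap ℚ_[p] K ((n.factorial : ℕ) : ℚ_[p]) from
      (map_natCast _ _).symm, norm_algebraMap']
  simpa only [heq] using tendsto_norm_factorial_padic (p := p)


/-- For continuous `φ : ℤ_p → ℂ_p`: the partial sums `T_n(φ)` satisfy
`‖T_m(φ)(x,y) − T_n(φ)(x,y)‖ ≤ |(n+1)!| ‖φ‖` for `m ≥ n`, and hence converge uniformly to a
continuous function `T(φ) : ℤ_p × ℤ_p → ℂ_p` given pointwise by the full series. -/
theorem twoVar_transform_partial_bound_and_unif_conv (p : ℕ) [Fact p.Prime] (K : Type*)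
    [NontriviallyNormedField K] [NormedAlgebra ℚ_[p] K] [IsUltrametricDist K] [CompleteSpace K]
    (φ : C(ℤ_[p], K)) :
    (∀ m n : ℕ, n ≤ m → ∀ x y : ℤ_[p],
      ‖twoVarPartial p (⇑φ) m x y - twoVarPartial p (⇑φ) n x y‖ ≤
        ‖(((n + 1).factorial : ℕ) : K)‖ * ‖φ‖) ∧
    ∃ T : C(ℤ_[p] × ℤ_[p], K),
      TendstoUniformly (fun n (q : ℤ_[p] × ℤ_[p]) => twoVarPartial p (⇑φ) n q.1 q.2) (⇑T) atTop ∧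
      ∀ x y : ℤ_[p], HasSum
        (fun k : ℕ => (-1 : K) ^ k * (k.factorial : K) * padicBinom p K y k * padicBinom p K x k *
          φ (x - (k : ℤ_[p]))) (T (x, y)) := by
  have hbound : ∀ m n : ℕ, n ≤ m → ∀ x y : ℤ_[p],
      ‖twoVarPartial p (⇑φ) m x y - twoVarPartial p (⇑φ) n x y‖ ≤
        ‖(((n + 1).factorial : ℕ) : K)‖ * ‖φ‖ := fun m n h x y => partial_bound φ m n h x y
  refine ⟨hbound, ?_⟩
  set F : ℕ → C(ℤ_[p] × ℤ_[p], K) := fun n =>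
    ⟨fun q => twoVarPartial p (⇑φ) n q.1 q.2, continuous_twoVarPartial φ n⟩ with hF
  have hdist : ∀ m n : ℕ, n ≤ m →
      dist (F m) (F n) ≤ ‖(((n + 1).factorial : ℕ) : K)‖ * ‖φ‖ := by
    intro m n h
    rw [dist_eq_norm]
    refine (ContinuousMap.norm_le _ (mul_nonneg (norm_nonneg _) (norm_nonneg _))).mpr fun q => ?_
    exact hbound m n h q.1 q.2
  have hb0 : Tendsto (fun n : ℕ => ‖(((n + 1).factorial : ℕ) : K)‖ * ‖φ‖) atTop (𝓝 0) := by
    have h2 : Tendsto (fun n : ℕ => ‖(((n + 1).factorial : ℕ) : K)‖) atTop (𝓝 0) :=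
      (tendsto_norm_factorial_K (p := p)).comp (tendsto_add_atTop_nat 1)
    simpa using h2.mul_const ‖φ‖
  have hcau : CauchySeq F := by
    refine cauchySeq_of_le_tendsto_0 _ (fun n m N hn hm => ?_) hb0
    rcases le_total n m with h | h
    · rw [dist_comm]
      exact (hdist m n h).trans (mul_le_mul_of_nonneg_right
        (norm_factK_le (p := p) (Nat.succ_le_succ hn)) (norm_nonneg _))
    · exact (hdist n m h).trans (mul_le_mul_of_nonneg_right
        (norm_factK_le (p := p) (Nat.succ_le_succ hm)) (norm_nonneg _))
  obtain ⟨T, hT⟩ := cauchySeq_tendsto_of_complete hcau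
  have hTU : TendstoUniformly (fun n (q : ℤ_[p] × ℤ_[p]) => twoVarPartial p (⇑φ) n q.1 q.2)
      (⇑T) atTop := by
    have h := ContinuousMap.tendsto_iff_tendstoUniformly.mp hT
    exact h
  refine ⟨T, hTU, fun x y => ?_⟩
  set f : ℕ → K := fun k => (-1 : K) ^ k * (k.factorial : K) * padicBinom p K y k *
    padicBinom p K x k * φ (x - (k : ℤ_[p])) with hf
  have hsum : Summable f := by
    apply NonarchimedeanAddGroup.summable_of_tendsto_cofinite_zero
    rw [Nat.cofinite_eq_atTop, tendsto_zero_iff_norm_tendsto_zero]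
    refine squeeze_zero (fun n => norm_nonneg _) (fun n => term_norm_le φ n x y) ?_
    simpa using (tendsto_norm_factorial_K (p := p) (K := K)).mul_const ‖φ‖
  have h1 := hsum.hasSum
  have h2 := h1.tendsto_sum_nat
  have h3 : Tendsto (fun n => ∑ k ∈ Finset.range n, f k) atTop (𝓝 (T (x, y))) := by
    have h4 : Tendsto (fun n => twoVarPartial p (⇑φ) n x y) atTop (𝓝 (T (x, y))) :=
      hTU.tendsto_at (x, y)
    rw [← tendsto_add_atTop_iff_nat 1]
    exact h4
  rwa [tendsto_nhds_unique h2 h3] at h1
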